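/- The following statements are equivalent: (1) Spec_S R is a noetherian topological space with respect to the S-Zariski topology; (2) every ideal of R is S-radically finite; (3) for every prime ideal P of R disjoint from S, P = √[S](I₀) for some finitely generated ideal I₀ of R with I₀ ⊆ P. -/

import Mathlib

/-- An ideal `P` is `S`-prime if `P ∩ S = ∅` and there is `s ∈ S` such that
whenever `a * b ∈ P`, either `s * a ∈ P` or `s * b ∈ P`. -/
def IsSPrime {R : Type*} [CommRing R] (S : Set R) (P : Ideal R) : Prop :=
  (P : Set R) ∩ S = ∅ ∧ ∃ s ∈ S, ∀ a b : R, a * b ∈ P → s * a ∈ P ∨ s * b ∈ P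

/-- The `S`-prime spectrum `Spec_S R`: the set of all `S`-prime ideals of `R`. -/
def SSpec {R : Type*} [CommRing R] (S : Set R) : Type _ :=
  {P : Ideal R // IsSPrime S P}

/-- The `S`-variety of an ideal `I`:
`V_S(I) = {P ∈ Spec_S R | s • I ⊆ P for some s ∈ S}`. -/
def SVar {R : Type*} [CommRing R] (S : Set R) (I : Ideal R) : Set (SSpec S) :=
  {P | ∃ s ∈ S, ∀ x ∈ I, s * x ∈ P.1}

/-- The `S`-radical of an ideal `I`:
`√[S](I) = {a ∈ R | s * a ^ n ∈ I for some s ∈ S, n ∈ ℕ}`. -/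
def SRad {R : Type*} [CommRing R] (S : Set R) (I : Ideal R) : Set R :=
  {a | ∃ s ∈ S, ∃ n : ℕ, s * a ^ n ∈ I}

/-- The `S`-Zariski topology on `Spec_S R`: the closed sets are exactly the `V_S(I)`. -/
def sZariskiTop {R : Type*} [CommRing R] (S : Set R) : TopologicalSpace (SSpec S) :=
  TopologicalSpace.generateFrom {U | ∃ I : Ideal R, U = (SVar S I)ᶜ}

/-- The `S`-flat topology on `Spec_S R`: the coarsest topology in which every
`V_S(f)`, `f ∈ R`, is open. -/
def sFlatTop {R : Type*} [CommRing R] (S : Set R) : TopologicalSpace (SSpec S) :=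
  TopologicalSpace.generateFrom {U | ∃ f : R, U = SVar S (Ideal.span {f})}

/-- An ideal `I` is `S`-radically finite if `√[S](I) = √[S](J)` for some finitely
generated ideal `J`. -/
def SRadFinite {R : Type*} [CommRing R] (S : Set R) (I : Ideal R) : Prop :=
  ∃ J : Ideal R, J.FG ∧ SRad S I = SRad S J


section Aux

variable {R : Type*} [CommRing R] (S : Set R)

lemma S_pow_mem (hS1 : (1:R) ∈ S) (hSmul : ∀ s ∈ S, ∀ t ∈ S, s * t ∈ S)
    {s : R} (hs : s ∈ S) (n : ℕ) : s ^ n ∈ S := by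
  induction n with
  | zero => simpa using hS1
  | succ n ih => rw [pow_succ]; exact hSmul _ ih _ hs

lemma subset_SRad (hS1 : (1:R) ∈ S) (I : Ideal R) : (I : Set R) ⊆ SRad S I :=
  fun a ha => ⟨1, hS1, 1, by simpa using ha⟩

lemma SRad_mono {I J : Ideal R} (h : I ≤ J) : SRad S I ⊆ SRad S J :=
  fun _ ⟨s, hs, n, h'⟩ => ⟨s, hs, n, h h'⟩

lemma SRad_le_SRad (hS1 : (1:R) ∈ S) (hSmul : ∀ s ∈ S, ∀ t ∈ S, s * t ∈ S)
    {I J : Ideal R} (h : (J : Set R) ⊆ SRad S I) : SRad S J ⊆ SRad S I := by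
  rintro a ⟨s, hsS, n, hsn⟩
  obtain ⟨t, htS, m, htm⟩ := h hsn
  refine ⟨t * s ^ m, hSmul _ htS _ (S_pow_mem S hS1 hSmul hsS m), n * m, ?_⟩
  have e : t * s ^ m * a ^ (n * m) = t * (s * a ^ n) ^ m := by
    rw [mul_pow, ← pow_mul]; ring
  rw [e]; exact htm

lemma SRad_subset_prime {Q : Ideal R} (hQ : Q.IsPrime) (hdisj : (Q : Set R) ∩ S = ∅)
    {I : Ideal R} (hIQ : I ≤ Q) : SRad S I ⊆ Q := by
  rintro a ⟨s, hsS, n, hsn⟩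
  have hsQ : s ∉ Q := fun h => Set.eq_empty_iff_forall_notMem.mp hdisj s ⟨h, hsS⟩
  rcases hQ.mem_or_mem (hIQ hsn) with h | h
  · exact absurd h hsQ
  · exact hQ.mem_of_pow_mem _ h

/-- The `S`-radical as an ideal. -/
def SRadI (hS1 : (1:R) ∈ S) (hSmul : ∀ s ∈ S, ∀ t ∈ S, s * t ∈ S) (I : Ideal R) :
    Ideal R where
  carrier := SRad S I
  zero_mem' := ⟨1, hS1, 1, by simpa using I.zero_mem⟩
  add_mem' := by
    rintro a b ⟨s, hs, n, hsn⟩ ⟨t, ht, m, htm⟩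
    refine ⟨s * t, hSmul _ hs _ ht, n + m, ?_⟩
    rw [add_pow, Finset.mul_sum]
    refine Ideal.sum_mem _ fun k hk => ?_
    rcases le_or_gt n k with hkn | hkn
    · obtain ⟨d, rfl⟩ := Nat.exists_eq_add_of_le hkn
      have e : s * t * (a ^ (n + d) * b ^ (n + m - (n + d)) * ((n + m).choose (n + d) : R))
          = (t * a ^ d * b ^ (n + m - (n + d)) * ((n + m).choose (n + d) : R)) * (s * a ^ n) := by
        rw [pow_add]; ring
      rw [e]; exact I.mul_mem_left _ hsn
    · have h1 : n + m - k = (n - k) + m := by omega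
      have e : s * t * (a ^ k * b ^ (n + m - k) * ((n + m).choose k : R))
          = (s * a ^ k * b ^ (n - k) * ((n + m).choose k : R)) * (t * b ^ m) := by
        rw [h1, pow_add]; ring
      rw [e]; exact I.mul_mem_left _ htm
  smul_mem' := by
    rintro c a ⟨s, hs, n, hsn⟩
    refine ⟨s, hs, n, ?_⟩
    have e : s * (c • a) ^ n = c ^ n * (s * a ^ n) := by rw [smul_eq_mul, mul_pow]; ring
    rw [e]; exact I.mul_mem_left _ hsn

lemma mem_SRadI (hS1 : (1:R) ∈ S) (hSmul : ∀ s ∈ S, ∀ t ∈ S, s * t ∈ S) (I : Ideal R)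
    {a : R} : a ∈ SRadI S hS1 hSmul I ↔ a ∈ SRad S I := Iff.rfl

lemma coe_SRadI (hS1 : (1:R) ∈ S) (hSmul : ∀ s ∈ S, ∀ t ∈ S, s * t ∈ S) (I : Ideal R) :
    (SRadI S hS1 hSmul I : Set R) = SRad S I := rfl

lemma isSPrime_of_prime (hS1 : (1:R) ∈ S) {Q : Ideal R} (hQ : Q.IsPrime)
    (hdisj : (Q : Set R) ∩ S = ∅) : IsSPrime S Q := by
  refine ⟨hdisj, 1, hS1, fun a b hab => ?_⟩
  rcases hQ.mem_or_mem hab with h | h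
  · exact Or.inl (by rwa [one_mul])
  · exact Or.inr (by rwa [one_mul])

lemma mem_SVar_prime (hS1 : (1:R) ∈ S) {P : SSpec S} (hQ : P.1.IsPrime) (I : Ideal R) :
    P ∈ SVar S I ↔ I ≤ P.1 := by
  constructor
  · rintro ⟨t, htS, ht⟩ x hx
    have htP : t ∉ P.1 := fun h => Set.eq_empty_iff_forall_notMem.mp P.2.1 t ⟨h, htS⟩
    rcases hQ.mem_or_mem (ht x hx) with h | h
    · exact absurd h htP
    · exact h
  · intro h
    exact ⟨1, hS1, fun x hx => by rw [one_mul]; exact h hx⟩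

lemma SSpec_exists_prime (hS1 : (1:R) ∈ S) (hSmul : ∀ s ∈ S, ∀ t ∈ S, s * t ∈ S)
    (P : SSpec S) : ∃ Q : Ideal R, Q.IsPrime ∧ (Q : Set R) ∩ S = ∅ ∧ P.1 ≤ Q ∧
      ∀ I : Ideal R, P ∈ SVar S I ↔ I ≤ Q := by
  obtain ⟨hdisj, s, hsS, hs⟩ := P.2
  have hnot : ∀ x ∈ S, x ∉ P.1 := fun x hx hxP =>
    Set.eq_empty_iff_forall_notMem.mp hdisj x ⟨hxP, hx⟩
  refine ⟨{ carrier := {x | ∃ n : ℕ, s ^ n * x ∈ P.1}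
            zero_mem' := ⟨0, by simpa using P.1.zero_mem⟩
            add_mem' := ?_
            smul_mem' := ?_ }, ?_, ?_, ?_, ?_⟩
  · rintro a b ⟨n, hn⟩ ⟨m, hm⟩
    refine ⟨n + m, ?_⟩
    have e : s ^ (n + m) * (a + b) = s ^ m * (s ^ n * a) + s ^ n * (s ^ m * b) := by
      rw [pow_add]; ring
    rw [e]; exact P.1.add_mem (P.1.mul_mem_left _ hn) (P.1.mul_mem_left _ hm)
  · rintro c a ⟨n, hn⟩
    refine ⟨n, ?_⟩
    have e : s ^ n * (c • a) = c * (s ^ n * a) := by rw [smul_eq_mul]; ring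
    rw [e]; exact P.1.mul_mem_left _ hn
  · rw [Ideal.isPrime_iff]
    constructor
    · intro htop
      have h1 : ∃ n : ℕ, s ^ n * (1:R) ∈ P.1 := by
        have := htop ▸ Submodule.mem_top (R := R) (x := (1:R))
        exact this
      obtain ⟨n, hn⟩ := h1
      rw [mul_one] at hn
      exact hnot _ (S_pow_mem S hS1 hSmul hsS n) hn
    · rintro x y ⟨n, hn⟩
      have h' : (s ^ n * x) * y ∈ P.1 := by rw [mul_assoc]; exact hn
      rcases hs _ _ h' with h | h
      · refine Or.inl ⟨n + 1, ?_⟩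
        have e : s ^ (n + 1) * x = s * (s ^ n * x) := by rw [pow_succ]; ring
        rw [e]; exact h
      · exact Or.inr ⟨1, by rwa [pow_one]⟩
  · apply Set.eq_empty_iff_forall_notMem.mpr
    rintro x ⟨⟨n, hn⟩, hxS⟩
    exact hnot _ (hSmul _ (S_pow_mem S hS1 hSmul hsS n) _ hxS) hn
  · intro x hx
    exact ⟨0, by rwa [pow_zero, one_mul]⟩
  · intro I
    constructor
    · rintro ⟨t, htS, ht⟩ x hx
      rcases hs t x (ht x hx) with h | h
      · exact absurd h (hnot _ (hSmul _ hsS _ htS))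
      · exact ⟨1, by rwa [pow_one]⟩
    · intro hIQ
      refine ⟨s * s, hSmul _ hsS _ hsS, fun x hx => ?_⟩
      obtain ⟨n, hn⟩ := hIQ hx
      cases n with
      | zero =>
        rw [pow_zero, one_mul] at hn
        rw [mul_assoc]
        exact P.1.mul_mem_left _ (P.1.mul_mem_left _ hn)
      | succ k =>
        have e : s ^ (k + 1) * x = s ^ k * (s * x) := by rw [pow_succ]; ring
        rw [e] at hn
        rcases hs _ _ hn with h | h
        · have : s * s ^ k = s ^ (k + 1) := by rw [pow_succ]; ring
          rw [this] at h
          exact absurd h (hnot _ (S_pow_mem S hS1 hSmul hsS (k + 1)))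
        · rwa [mul_assoc]

lemma exists_prime_not_mem (hS1 : (1:R) ∈ S) (hSmul : ∀ s ∈ S, ∀ t ∈ S, s * t ∈ S)
    {I : Ideal R} {a : R} (ha : a ∉ SRad S I) :
    ∃ Q : Ideal R, Q.IsPrime ∧ (Q : Set R) ∩ S = ∅ ∧ I ≤ Q ∧ a ∉ Q := by
  let T : Submonoid R :=
    { carrier := {x | ∃ s ∈ S, ∃ n : ℕ, x = s * a ^ n}
      one_mem' := ⟨1, hS1, 0, by simp⟩
      mul_mem' := by
        rintro x y ⟨s, hs, n, rfl⟩ ⟨t, ht, m, rfl⟩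
        exact ⟨s * t, hSmul _ hs _ ht, n + m, by rw [pow_add]; ring⟩ }
  have hdisj : Disjoint (I : Set R) (T : Set R) := by
    rw [Set.disjoint_left]
    rintro x hxI ⟨s, hs, n, rfl⟩
    exact ha ⟨s, hs, n, hxI⟩
  obtain ⟨p, hp, hIp, hdisj'⟩ := Ideal.exists_le_prime_disjoint I T hdisj
  refine ⟨p, hp, ?_, hIp, fun haP => Set.disjoint_left.mp hdisj' haP ⟨1, hS1, 1, by simp⟩⟩
  apply Set.eq_empty_iff_forall_notMem.mpr
  rintro x ⟨hxp, hxS⟩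
  exact Set.disjoint_left.mp hdisj' hxp ⟨x, hxS, 0, by simp⟩

lemma SVar_subset_iff (hS1 : (1:R) ∈ S) (hSmul : ∀ s ∈ S, ∀ t ∈ S, s * t ∈ S)
    {I J : Ideal R} : SVar S I ⊆ SVar S J ↔ SRad S J ⊆ SRad S I := by
  constructor
  · intro h b hb
    by_contra hbI
    obtain ⟨Q, hQ, hdisjQ, hIQ, hbQ⟩ := exists_prime_not_mem S hS1 hSmul hbI
    have hSP := isSPrime_of_prime S hS1 hQ hdisjQ
    have hQmem : (⟨Q, hSP⟩ : SSpec S) ∈ SVar S I :=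
      (mem_SVar_prime S hS1 hQ I).mpr hIQ
    have hJQ : J ≤ Q := (mem_SVar_prime S hS1 hQ J).mp (h hQmem)
    exact hbQ (SRad_subset_prime S hQ hdisjQ hJQ hb)
  · intro h P hP
    obtain ⟨Q, hQ, hdisjQ, _, hiff⟩ := SSpec_exists_prime S hS1 hSmul P
    have hIQ : I ≤ Q := (hiff I).mp hP
    refine (hiff J).mpr fun x hx => ?_
    exact SRad_subset_prime S hQ hdisjQ hIQ (h (subset_SRad S hS1 J hx))

lemma SVar_eq_iff (hS1 : (1:R) ∈ S) (hSmul : ∀ s ∈ S, ∀ t ∈ S, s * t ∈ S)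
    {I J : Ideal R} : SVar S I = SVar S J ↔ SRad S I = SRad S J := by
  rw [Set.Subset.antisymm_iff, Set.Subset.antisymm_iff, SVar_subset_iff S hS1 hSmul,
    SVar_subset_iff S hS1 hSmul, and_comm]

lemma SVar_top : SVar S (⊤ : Ideal R) = ∅ := by
  apply Set.eq_empty_iff_forall_notMem.mpr
  rintro P ⟨s, hsS, hs⟩
  have := hs 1 trivial
  rw [mul_one] at this
  exact Set.eq_empty_iff_forall_notMem.mp P.2.1 s ⟨this, hsS⟩

lemma SVar_mul (hS1 : (1:R) ∈ S) (hSmul : ∀ s ∈ S, ∀ t ∈ S, s * t ∈ S) (I J : Ideal R) :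
    SVar S (I * J) = SVar S I ∪ SVar S J := by
  ext P
  obtain ⟨Q, hQ, _, _, hiff⟩ := SSpec_exists_prime S hS1 hSmul P
  simp only [Set.mem_union, hiff]
  exact hQ.mul_le

lemma SVar_iSup (hS1 : (1:R) ∈ S) (hSmul : ∀ s ∈ S, ∀ t ∈ S, s * t ∈ S)
    {ι : Sort*} (f : ι → Ideal R) : SVar S (⨆ i, f i) = ⋂ i, SVar S (f i) := by
  ext P
  obtain ⟨Q, hQ, _, _, hiff⟩ := SSpec_exists_prime S hS1 hSmul P
  simp only [Set.mem_iInter, hiff, iSup_le_iff]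

/-- The S-Zariski topology, described concretely. -/
def sTop (hS1 : (1:R) ∈ S) (hSmul : ∀ s ∈ S, ∀ t ∈ S, s * t ∈ S) :
    TopologicalSpace (SSpec S) where
  IsOpen U := ∃ I : Ideal R, U = (SVar S I)ᶜ
  isOpen_univ := ⟨⊤, by rw [SVar_top, Set.compl_empty]⟩
  isOpen_inter := fun U V ⟨I, hI⟩ ⟨J, hJ⟩ =>
    ⟨I * J, by rw [hI, hJ, SVar_mul S hS1 hSmul, Set.compl_union]⟩
  isOpen_sUnion := by
    intro 𝒰 h
    choose f hf using h
    refine ⟨⨆ U : 𝒰, f U.1 U.2, ?_⟩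
    rw [SVar_iSup S hS1 hSmul, Set.compl_iInter, Set.sUnion_eq_iUnion]
    exact Set.iUnion_congr fun U => hf U.1 U.2

end Aux

section Aux2
open Topology

variable {R : Type*} [CommRing R] (S : Set R)

lemma sZariskiTop_eq (hS1 : (1:R) ∈ S) (hSmul : ∀ s ∈ S, ∀ t ∈ S, s * t ∈ S) :
    sZariskiTop S = sTop S hS1 hSmul := by
  have h : {U : Set (SSpec S) | ∃ I : Ideal R, U = (SVar S I)ᶜ}
      = {U | IsOpen[sTop S hS1 hSmul] U} := rfl
  rw [sZariskiTop, h, TopologicalSpace.generateFrom_setOf_isOpen]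

lemma isClosed_iff_SVar (hS1 : (1:R) ∈ S) (hSmul : ∀ s ∈ S, ∀ t ∈ S, s * t ∈ S)
    {C : Set (SSpec S)} :
    IsClosed[sZariskiTop S] C ↔ ∃ I : Ideal R, C = SVar S I := by
  rw [sZariskiTop_eq S hS1 hSmul]
  constructor
  · intro h
    obtain ⟨I, hI⟩ : ∃ I : Ideal R, Cᶜ = (SVar S I)ᶜ := h.isOpen_compl
    exact ⟨I, by rw [← compl_compl C, hI, compl_compl]⟩
  · rintro ⟨I, rfl⟩
    exact @IsClosed.mk _ (sTop S hS1 hSmul) _ (⟨I, rfl⟩ :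
      ∃ J : Ideal R, (SVar S I)ᶜ = (SVar S J)ᶜ)

end Aux2

section Aux3

variable {R : Type*} [CommRing R] (S : Set R)

open Ideal

lemma shrink (hS1 : (1:R) ∈ S) (hSmul : ∀ s ∈ S, ∀ t ∈ S, s * t ∈ S)
    {I J : Ideal R} (hJ : J.FG) (h : (J : Set R) ⊆ SRad S I) :
    ∃ K : Ideal R, K.FG ∧ K ≤ I ∧ SRad S K = SRad S J := by
  obtain ⟨T, rfl⟩ := hJ
  have hy : ∀ y : {x // x ∈ T}, ∃ z : R, z ∈ I ∧ z ∈ Ideal.span (T : Set R) ∧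
      (y : R) ∈ SRad S (Ideal.span {z}) := by
    intro y
    have hyJ : (y : R) ∈ Ideal.span (T : Set R) := Ideal.subset_span y.2
    obtain ⟨s, hs, n, hsn⟩ := h hyJ
    refine ⟨s * (y : R) ^ (n + 1), ?_, ?_, ⟨s, hs, n + 1, Ideal.mem_span_singleton_self _⟩⟩
    · have e : s * (y:R) ^ (n+1) = (s * (y:R) ^ n) * y := by rw [pow_succ]; ring
      rw [e]; exact I.mul_mem_right _ hsn
    · exact (Ideal.span (T : Set R)).mul_mem_left _
        (by rw [pow_succ]; exact (Ideal.span (T : Set R)).mul_mem_left _ hyJ)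
  choose g hg1 hg2 hg3 using hy
  refine ⟨Ideal.span (Set.range g), Submodule.fg_span (Set.finite_range g), ?_, ?_⟩
  · exact Ideal.span_le.mpr (by rintro _ ⟨y, rfl⟩; exact hg1 y)
  · apply subset_antisymm
    · exact SRad_mono S (Ideal.span_le.mpr (by rintro _ ⟨y, rfl⟩; exact hg2 y))
    · apply SRad_le_SRad S hS1 hSmul
      have hsub : Ideal.span (T : Set R) ≤ SRadI S hS1 hSmul (Ideal.span (Set.range g)) := by
        apply Ideal.span_le.mpr
        intro y hyT
        have hzle : Ideal.span {g ⟨y, hyT⟩} ≤ Ideal.span (Set.range g) :=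
          Ideal.span_le.mpr (Set.singleton_subset_iff.mpr (Ideal.subset_span ⟨⟨y, hyT⟩, rfl⟩))
        exact SRad_mono S hzle (hg3 ⟨y, hyT⟩)
      exact fun x hx => hsub hx

end Aux3

section Dirs

variable {R : Type*} [CommRing R] (S : Set R)

open TopologicalSpace

lemma dir12 (hS1 : (1:R) ∈ S) (hSmul : ∀ s ∈ S, ∀ t ∈ S, s * t ∈ S)
    (h1 : @TopologicalSpace.NoetherianSpace (SSpec S) (sZariskiTop S)) :
    ∀ I : Ideal R, SRadFinite S I := by
  intro I₀
  by_contra hI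
  letI := sZariskiTop S
  have hwf : WellFoundedLT (Closeds (SSpec S)) :=
    ((noetherianSpace_TFAE (SSpec S)).out 0 1).mp h1
  have step : ∀ J : Ideal R, J.FG → J ≤ I₀ → ∃ a, a ∈ I₀ ∧ a ∉ SRad S J := by
    intro J hfg hle
    by_contra hc
    push_neg at hc
    exact hI ⟨J, hfg, subset_antisymm
      (SRad_le_SRad S hS1 hSmul (fun x hx => hc x hx)) (SRad_mono S hle)⟩
  let F : ℕ → {J : Ideal R // J.FG ∧ J ≤ I₀} := fun n =>
    Nat.rec (motive := fun _ => {J : Ideal R // J.FG ∧ J ≤ I₀})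
      ⟨⊥, Submodule.fg_bot, bot_le⟩
      (fun _ p => ⟨p.1 ⊔ Ideal.span {Classical.choose (step p.1 p.2.1 p.2.2)},
        Submodule.FG.sup p.2.1 (Submodule.fg_span_singleton _),
        sup_le p.2.2 ((Ideal.span_singleton_le_iff_mem _).mpr
          (Classical.choose_spec (step p.1 p.2.1 p.2.2)).1)⟩) n
  have hssub : ∀ n, SVar S (F (n+1)).1 ⊂ SVar S (F n).1 := by
    intro n
    have ha := Classical.choose_spec (step (F n).1 (F n).2.1 (F n).2.2)
    set a := Classical.choose (step (F n).1 (F n).2.1 (F n).2.2) with ha_def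
    have hle : (F n).1 ≤ (F (n+1)).1 := le_sup_left
    have hsub : SVar S (F (n+1)).1 ⊆ SVar S (F n).1 :=
      (SVar_subset_iff S hS1 hSmul).mpr (SRad_mono S hle)
    refine ssubset_iff_subset_ne.mpr ⟨hsub, fun heq => ?_⟩
    have haRad : a ∈ SRad S (F (n+1)).1 :=
      subset_SRad S hS1 _ (le_sup_right (α := Ideal R) (Ideal.mem_span_singleton_self a))
    have : SRad S (F (n+1)).1 = SRad S (F n).1 := (SVar_eq_iff S hS1 hSmul).mp heq
    exact ha.2 (this ▸ haRad)
  let C : ℕ → Closeds (SSpec S) := fun n =>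
    ⟨SVar S (F n).1, (isClosed_iff_SVar S hS1 hSmul).mpr ⟨(F n).1, rfl⟩⟩
  have hC : ∀ n, C (n+1) < C n := by
    intro n
    have h := hssub n
    exact lt_iff_le_and_ne.mpr ⟨h.subset, fun he => h.ne (congrArg (·.1) he)⟩
  exact (RelEmbedding.natGT C hC).not_wellFounded hwf.wf

end Dirs

section Dirs2

variable {R : Type*} [CommRing R] (S : Set R)

open TopologicalSpace

lemma dir21 (hS1 : (1:R) ∈ S) (hSmul : ∀ s ∈ S, ∀ t ∈ S, s * t ∈ S)
    (h2 : ∀ I : Ideal R, SRadFinite S I) :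
    @TopologicalSpace.NoetherianSpace (SSpec S) (sZariskiTop S) := by
  letI := sZariskiTop S
  refine ((noetherianSpace_TFAE (SSpec S)).out 0 1).mpr ?_
  refine ⟨RelEmbedding.wellFounded_iff_isEmpty.mpr ⟨fun f => ?_⟩⟩
  have hcl : ∀ n : ℕ, ∃ I : Ideal R, ((f n : Closeds (SSpec S)) : Set (SSpec S)) = SVar S I :=
    fun n => (isClosed_iff_SVar S hS1 hSmul).mp (f n).2
  choose I hI using hcl
  have hsub : ∀ n, SRad S (I n) ⊆ SRad S (I (n+1)) ∧ ¬ SRad S (I (n+1)) ⊆ SRad S (I n) := by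
    intro n
    have hlt : f (n+1) < f n := f.map_rel_iff.mpr (Nat.lt_succ_self n)
    have hss : ((f (n+1) : Closeds (SSpec S)) : Set (SSpec S)) ⊂ (f n : Closeds (SSpec S)) :=
      SetLike.coe_ssubset_coe.mpr hlt
    rw [hI, hI] at hss
    refine ⟨(SVar_subset_iff S hS1 hSmul).mp hss.subset, fun hle => ?_⟩
    exact hss.2 ((SVar_subset_iff S hS1 hSmul).mpr hle)
  let G : ℕ →o Ideal R := ⟨fun n => SRadI S hS1 hSmul (I n),
    monotone_nat_of_le_succ (fun n x hx => (hsub n).1 hx)⟩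
  obtain ⟨J, hJfg, hU⟩ := h2 (⨆ n, G n)
  obtain ⟨T, hT⟩ := hJfg
  have hx : ∀ y : {v // v ∈ T}, ∃ m : ℕ, (y : R) ∈ SRad S (I m) := by
    intro y
    have hyJ : (y : R) ∈ SRad S J := subset_SRad S hS1 J (hT ▸ Ideal.subset_span y.2)
    rw [← hU] at hyJ
    obtain ⟨s, hs, n, hsn⟩ := hyJ
    obtain ⟨m, hm⟩ := (Submodule.mem_iSup_of_chain G _).mp hsn
    exact ⟨m, SRad_le_SRad S hS1 hSmul (subset_refl _) ⟨s, hs, n, hm⟩⟩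
  choose φ hφ using hx
  classical
  let N := Finset.univ.sup φ
  have hmono : ∀ m n : ℕ, m ≤ n → SRad S (I m) ⊆ SRad S (I n) := fun m n h x hx =>
    G.monotone h hx
  have hJle : (Ideal.span (T : Set R) : Set R) ⊆ SRad S (I N) := by
    intro x hx
    have : Ideal.span (T : Set R) ≤ SRadI S hS1 hSmul (I N) := by
      apply Ideal.span_le.mpr
      intro y hy
      exact hmono (φ ⟨y, hy⟩) N (Finset.le_sup (Finset.mem_univ _)) (hφ ⟨y, hy⟩)
    exact this hx
  have hlast : SRad S (I (N+1)) ⊆ SRad S (I N) := by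
    intro x hx
    have hx1 : x ∈ (⨆ n, G n : Ideal R) := le_iSup G (N+1) hx
    have hx2 : x ∈ SRad S (⨆ n, G n) := subset_SRad S hS1 _ hx1
    rw [hU, ← hT] at hx2
    exact SRad_le_SRad S hS1 hSmul hJle hx2
  exact (hsub N).2 hlast

end Dirs2

section Dirs3

variable {R : Type*} [CommRing R] (S : Set R)

lemma dir23 (hS1 : (1:R) ∈ S) (hSmul : ∀ s ∈ S, ∀ t ∈ S, s * t ∈ S)
    (h2 : ∀ I : Ideal R, SRadFinite S I) :
    ∀ P : Ideal R, P.IsPrime → (P : Set R) ∩ S = ∅ →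
      ∃ I₀ : Ideal R, I₀.FG ∧ I₀ ≤ P ∧ (P : Set R) = SRad S I₀ := by
  intro P hP hdisj
  obtain ⟨J, hJfg, hrad⟩ := h2 P
  have hJsub : (J : Set R) ⊆ SRad S P := by rw [hrad]; exact subset_SRad S hS1 J
  obtain ⟨K, hKfg, hKle, hKrad⟩ := shrink S hS1 hSmul hJfg hJsub
  refine ⟨K, hKfg, hKle, ?_⟩
  have hPrad : SRad S P = (P : Set R) :=
    subset_antisymm (SRad_subset_prime S hP hdisj le_rfl) (subset_SRad S hS1 P)
  rw [← hPrad, hrad, ← hKrad]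

end Dirs3

section Dirs4

variable {R : Type*} [CommRing R] (S : Set R)

lemma dir32 (hS1 : (1:R) ∈ S) (hSmul : ∀ s ∈ S, ∀ t ∈ S, s * t ∈ S)
    (h3 : ∀ P : Ideal R, P.IsPrime → (P : Set R) ∩ S = ∅ →
      ∃ I₀ : Ideal R, I₀.FG ∧ I₀ ≤ P ∧ (P : Set R) = SRad S I₀) :
    ∀ I : Ideal R, SRadFinite S I := by
  by_contra hcon
  push_neg at hcon
  obtain ⟨I₀, hI₀⟩ := hcon
  classical
  -- Zorn's lemma on the family of non-S-radically-finite ideals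
  have hfin : ∀ (c : Set (Ideal R)), IsChain (· ≤ ·) c → ∀ y ∈ c,
      ∀ T' : Finset R, (∀ v ∈ T', ∃ m ∈ c, v ∈ SRad S m) →
      ∃ m ∈ c, ∀ v ∈ T', v ∈ SRad S m := by
    intro c hchain y hy T' hT'
    induction T' using Finset.induction with
    | empty => exact ⟨y, hy, by simp⟩
    | @insert a T'' ha ih =>
      obtain ⟨m1, hm1c, hm1⟩ := ih (fun v hv => hT' v (Finset.mem_insert_of_mem hv))
      obtain ⟨m2, hm2c, hm2⟩ := hT' a (Finset.mem_insert_self _ _)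
      rcases eq_or_ne m1 m2 with rfl | hne
      · exact ⟨m1, hm1c, fun v hv => by
          rcases Finset.mem_insert.mp hv with rfl | hv
          · exact hm2
          · exact hm1 v hv⟩
      rcases hchain.total hm1c hm2c with hle | hle
      · exact ⟨m2, hm2c, fun v hv => by
          rcases Finset.mem_insert.mp hv with rfl | hv
          · exact hm2
          · exact SRad_mono S hle (hm1 v hv)⟩
      · exact ⟨m1, hm1c, fun v hv => by
          rcases Finset.mem_insert.mp hv with rfl | hv
          · exact SRad_mono S hle hm2
          · exact hm1 v hv⟩
  have hzorn : ∀ c ⊆ {J : Ideal R | ¬ SRadFinite S J}, IsChain (· ≤ ·) c → ∀ y ∈ c,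
      ∃ ub ∈ {J : Ideal R | ¬ SRadFinite S J}, ∀ z ∈ c, z ≤ ub := by
    intro c hcs hchain y hy
    refine ⟨sSup c, ?_, fun z hz => le_sSup hz⟩
    rintro ⟨J, hJfg, hJrad⟩
    obtain ⟨T, hT⟩ := hJfg
    have hne : c.Nonempty := ⟨y, hy⟩
    have hdir : DirectedOn (· ≤ ·) c := hchain.directedOn
    have hmem : ∀ v ∈ T, ∃ m ∈ c, v ∈ SRad S m := by
      intro v hv
      have h1 : v ∈ SRad S (sSup c) := by
        rw [hJrad, ← hT]
        exact subset_SRad S hS1 _ (Ideal.subset_span hv)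
      obtain ⟨s, hs, n, hsn⟩ := h1
      obtain ⟨m, hmc, hm⟩ := (Submodule.mem_sSup_of_directed hne hdir).mp hsn
      exact ⟨m, hmc, s, hs, n, hm⟩
    obtain ⟨m, hmc, hm⟩ := hfin c hchain y hy T hmem
    apply hcs hmc
    refine ⟨J, ⟨T, hT⟩, subset_antisymm ?_ ?_⟩
    · intro x hx
      rw [← hJrad]
      exact SRad_mono S (le_sSup hmc) hx
    · rw [← hT]
      apply SRad_le_SRad S hS1 hSmul
      intro x hx
      exact (Ideal.span_le.mpr (fun v hv => hm v hv) :
        Ideal.span (T : Set R) ≤ SRadI S hS1 hSmul m) hx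
  obtain ⟨P, -, hPmax⟩ := zorn_le_nonempty₀ {J : Ideal R | ¬ SRadFinite S J} hzorn I₀ hI₀
  have hPs : ¬ SRadFinite S P := hPmax.1
  -- P is disjoint from S
  have hdisj : (P : Set R) ∩ S = ∅ := by
    by_contra hd
    obtain ⟨s₀, hs₀P, hs₀S⟩ := Set.nonempty_iff_ne_empty.mpr hd
    have huniv : ∀ (Q : Ideal R), s₀ ∈ Q → SRad S Q = Set.univ := fun Q hQ =>
      Set.eq_univ_of_forall (fun a => ⟨s₀, hs₀S, 0, by simpa using hQ⟩)
    exact hPs ⟨Ideal.span {s₀}, Submodule.fg_span_singleton _,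
      by rw [huniv P hs₀P, huniv _ (Ideal.mem_span_singleton_self s₀)]⟩
  -- P is prime
  have hP : P.IsPrime := by
    rw [Ideal.isPrime_iff]
    constructor
    · intro h
      rw [h] at hdisj
      exact Set.eq_empty_iff_forall_notMem.mp hdisj 1 ⟨Submodule.mem_top, hS1⟩
    · intro a b hab
      by_contra hcon2
      push_neg at hcon2
      obtain ⟨haP, hbP⟩ := hcon2
      set A := P ⊔ Ideal.span {a} with hA_def
      set B := P.colon (Ideal.span {a}) with hB_def
      have hPA : P ≤ A := le_sup_left
      have hPB : P ≤ B := fun x hx => Ideal.mem_colon_span_singleton.mpr (P.mul_mem_right a hx)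
      have hA : SRadFinite S A := by
        by_contra hAs
        exact haP (hPmax.2 hAs hPA
          (le_sup_right (α := Ideal R) (Ideal.mem_span_singleton_self a)))
      have hB : SRadFinite S B := by
        by_contra hBs
        exact hbP (hPmax.2 hBs hPB (Ideal.mem_colon_span_singleton.mpr (by rwa [mul_comm])))
      -- shrink the witnesses
      obtain ⟨J, hJfg, hJrad⟩ := hA
      obtain ⟨K, hKfg, hKA, hKrad⟩ := shrink S hS1 hSmul hJfg
        (by rw [hJrad]; exact subset_SRad S hS1 J : (J : Set R) ⊆ SRad S A)
      have hKradA : SRad S K = SRad S A := by rw [hKrad, hJrad]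
      obtain ⟨J', hJ'fg, hJ'rad⟩ := hB
      obtain ⟨K', hK'fg, hK'B, hK'rad⟩ := shrink S hS1 hSmul hJ'fg
        (by rw [hJ'rad]; exact subset_SRad S hS1 J' : (J' : Set R) ⊆ SRad S B)
      have hK'radB : SRad S K' = SRad S B := by rw [hK'rad, hJ'rad]
      obtain ⟨T, hT⟩ := hKfg
      have hdec : ∀ y : {x // x ∈ T}, ∃ p : R, p ∈ P ∧ (y : R) - p ∈ Ideal.span {a} := by
        intro y
        have hyK : (y : R) ∈ K := hT ▸ Ideal.subset_span y.2
        obtain ⟨p, hp, z, hz, hpz⟩ := Submodule.mem_sup.mp (hKA hyK)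
        exact ⟨p, hp, by rw [← hpz]; simpa using hz⟩
      choose π hπ1 hπ2 using hdec
      set L : Ideal R := Ideal.span (Set.range π) ⊔ Ideal.span {a} * K' with hL_def
      have hLfg : L.FG := Submodule.FG.sup (Submodule.fg_span (Set.finite_range π))
        (Submodule.FG.mul (Submodule.fg_span_singleton _) hK'fg)
      have hranP : Ideal.span (Set.range π) ≤ P :=
        Ideal.span_le.mpr (by rintro _ ⟨y, rfl⟩; exact hπ1 y)
      have hLP : L ≤ P := by
        refine sup_le hranP (Ideal.mul_le.mpr ?_)
        intro r hr z hz
        obtain ⟨d, hd⟩ := Ideal.mem_span_singleton'.mp hr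
        have hza : z * a ∈ P := Ideal.mem_colon_span_singleton.mp (hK'B hz)
        have e : r * z = d * (z * a) := by rw [← hd]; ring
        rw [e]; exact P.mul_mem_left _ hza
      have hKle2 : K ≤ Ideal.span (Set.range π) ⊔ Ideal.span {a} := by
        rw [← hT]
        apply Ideal.span_le.mpr
        intro y hy
        have e : y = π ⟨y, hy⟩ + (y - π ⟨y, hy⟩) := by ring
        rw [e]
        exact Submodule.add_mem_sup (Ideal.subset_span ⟨⟨y, hy⟩, rfl⟩) (hπ2 ⟨y, hy⟩)
      have key : (P : Set R) ⊆ SRad S L := by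
        intro x hx
        have hxK : x ∈ SRad S K := by
          rw [hKradA]
          exact subset_SRad S hS1 A (hPA hx)
        obtain ⟨s, hs, n, hsn⟩ := hxK
        have hsn1 : s * x ^ (n + 1) ∈ K := by
          have e : s * x ^ (n + 1) = s * x ^ n * x := by rw [pow_succ]; ring
          rw [e]; exact K.mul_mem_right x hsn
        obtain ⟨q, hq, z, hz, hqz⟩ := Submodule.mem_sup.mp (hKle2 hsn1)
        obtain ⟨u, hu⟩ := Ideal.mem_span_singleton'.mp hz
        have hqP : q ∈ P := hranP hq
        have hzP : z ∈ P := by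
          have e : z = s * x ^ (n + 1) - q := by rw [← hqz]; ring
          rw [e]
          refine P.sub_mem (P.mul_mem_left s ?_) hqP
          rw [pow_succ]
          exact P.mul_mem_left _ hx
        have huB : u ∈ B := Ideal.mem_colon_span_singleton.mpr (by rw [hu]; exact hzP)
        have huRad : u ∈ SRad S K' := by
          rw [hK'radB]
          exact subset_SRad S hS1 B huB
        obtain ⟨t, ht, m, htm⟩ := huRad
        have htm1 : t * u ^ (m + 1) ∈ K' := by
          have e : t * u ^ (m + 1) = t * u ^ m * u := by rw [pow_succ]; ring
          rw [e]; exact K'.mul_mem_right u htm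
        obtain ⟨c', hc'⟩ := sub_dvd_pow_sub_pow (s * x ^ (n + 1)) (u * a) (m + 1)
        have hdiff : s * x ^ (n + 1) - u * a = q := by rw [← hqz, hu]; ring
        rw [hdiff] at hc'
        refine ⟨t * s ^ (m + 1), hSmul _ ht _ (S_pow_mem S hS1 hSmul hs (m + 1)),
          (n + 1) * (m + 1), ?_⟩
        have e : t * s ^ (m + 1) * x ^ ((n + 1) * (m + 1)) =
            a * (a ^ m * (t * u ^ (m + 1))) + q * (t * c') := by
          have e1 : (s * x ^ (n + 1)) ^ (m + 1) = u ^ (m + 1) * a ^ (m + 1) + q * c' := by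
            have := hc'
            have e2 : (s * x ^ (n + 1)) ^ (m + 1) =
                ((s * x ^ (n + 1)) ^ (m + 1) - (u * a) ^ (m + 1)) + (u * a) ^ (m + 1) := by ring
            rw [e2, ← this, mul_pow]; ring
          calc t * s ^ (m + 1) * x ^ ((n + 1) * (m + 1))
              = t * ((s * x ^ (n + 1)) ^ (m + 1)) := by rw [mul_pow, ← pow_mul]; ring
            _ = t * (u ^ (m + 1) * a ^ (m + 1) + q * c') := by rw [e1]
            _ = a * (a ^ m * (t * u ^ (m + 1))) + q * (t * c') := by rw [pow_succ]; ring
        rw [e]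
        refine L.add_mem (Ideal.mem_sup_right ?_) (Ideal.mem_sup_left ?_)
        · exact Ideal.mul_mem_mul (Ideal.mem_span_singleton_self a) (K'.mul_mem_left _ htm1)
        · exact Ideal.mul_mem_right _ _ hq
      exact hPs ⟨L, hLfg, subset_antisymm (SRad_le_SRad S hS1 hSmul key) (SRad_mono S hLP)⟩
  obtain ⟨I₁, hI₁fg, hI₁le, hI₁eq⟩ := h3 P hP hdisj
  refine hPs ⟨I₁, hI₁fg, subset_antisymm ?_ (SRad_mono S hI₁le)⟩
  exact SRad_le_SRad S hS1 hSmul hI₁eq.le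

end Dirs4

/-- TFAE: (1) `Spec_S R` is noetherian for the `S`-Zariski topology;
(2) every ideal of `R` is `S`-radically finite;
(3) every prime `P` disjoint from `S` satisfies `P = √[S](I₀)` for some finitely
generated ideal `I₀ ⊆ P`. -/
theorem sZariski_noetherian_tfae {R : Type*} [CommRing R] [Nontrivial R] (S : Set R)
    (hS0 : (0 : R) ∉ S) (hS1 : (1 : R) ∈ S) (hSmul : ∀ s ∈ S, ∀ t ∈ S, s * t ∈ S) :
    List.TFAE
      [@TopologicalSpace.NoetherianSpace (SSpec S) (sZariskiTop S),
       ∀ I : Ideal R, SRadFinite S I,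
       ∀ P : Ideal R, P.IsPrime → (P : Set R) ∩ S = ∅ →
         ∃ I₀ : Ideal R, I₀.FG ∧ I₀ ≤ P ∧ (P : Set R) = SRad S I₀] := by
  tfae_have 1 → 2 := dir12 S hS1 hSmul
  tfae_have 2 → 1 := dir21 S hS1 hSmul
  tfae_have 2 → 3 := dir23 S hS1 hSmul
  tfae_have 3 → 2 := dir32 S hS1 hSmul
  tfae_finish
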